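/- Let H be a complex separable Hilbert space, let A be a compact bounded linear operator on H with ‖A‖ < 1, and let B be an operator-norm limit point of the sequence (|A^n|^{1/n})_{n≥1}. Then for every real r ≥ 0, V(A,r) ⊆ V(B,r). -/

import Mathlib

open scoped NNReal InnerProductSpace
open Filter Topology

/-- The absolute value `|T| = (T*T)^{1/2}` of a bounded operator on a complex Hilbert space. -/
noncomputable def opAbs {H : Type*} [NormedAddCommGroup H] [InnerProductSpace ℂ H]
    [CompleteSpace H] (T : H →L[ℂ] H) : H →L[ℂ] H :=
  CFC.sqrt (ContinuousLinearMap.adjoint T * T)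

/-- `|T ^ n| ^ (1 / n)`, via the continuous functional calculus. -/
noncomputable def absPow {H : Type*} [NormedAddCommGroup H] [InnerProductSpace ℂ H]
    [CompleteSpace H] (T : H →L[ℂ] H) (n : ℕ) : H →L[ℂ] H :=
  CFC.nnrpow (opAbs (T ^ n)) ((n : ℝ≥0))⁻¹

section AuxSeq

private lemma seq_ratio (a : ℕ → ℝ) (ha : ∀ m, 0 ≤ a m)
    (h : ∀ m, a (m+1) ^ 2 ≤ a m * a (m+2)) :
    ∀ p m, p ≤ m → a (p+1) * a m ≤ a p * a (m+1) := by
  intro p m hpm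
  induction m, hpm using Nat.le_induction with
  | base => rw [mul_comm]
  | succ m hpm ih =>
    rcases (ha (m+1)).eq_or_lt with hz | hpos
    · calc a (p+1) * a (m+1) = 0 := by rw [← hz, mul_zero]
        _ ≤ a p * a (m+2) := mul_nonneg (ha p) (ha (m+2))
    · have h1 : (a (p+1) * a (m+1)) * a (m+1) ≤ (a p * a (m+2)) * a (m+1) := by
        nlinarith [mul_le_mul_of_nonneg_left (h m) (ha (p+1)),
          mul_le_mul_of_nonneg_right ih (ha (m+2))]
      exact le_of_mul_le_mul_right h1 hpos

private lemma seq_pow (a : ℕ → ℝ) (ha : ∀ m, 0 ≤ a m)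
    (h : ∀ m, a (m+1) ^ 2 ≤ a m * a (m+2)) (n : ℕ) :
    ∀ d, a (n+1) ^ (d+1) ≤ a n ^ d * a (n+1+d) := by
  intro d
  induction d with
  | zero => simp
  | succ d ih =>
    have hr : a (n+1) * a (n+1+d) ≤ a n * a (n+1+d+1) := seq_ratio a ha h n (n+1+d) (by omega)
    have e1 : n+1+(d+1) = n+1+d+1 := by omega
    rw [e1]
    calc a (n+1) ^ (d+1+1) = a (n+1) ^ (d+1) * a (n+1) := by ring
      _ ≤ (a n ^ d * a (n+1+d)) * a (n+1) := mul_le_mul_of_nonneg_right ih (ha _)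
      _ = a n ^ d * (a (n+1) * a (n+1+d)) := by ring
      _ ≤ a n ^ d * (a n * a (n+1+d+1)) := mul_le_mul_of_nonneg_left hr (pow_nonneg (ha n) d)
      _ = a n ^ (d+1) * a (n+1+d+1) := by ring

private lemma seq_interp (a : ℕ → ℝ) (ha : ∀ m, 0 ≤ a m)
    (h : ∀ m, a (m+1) ^ 2 ≤ a m * a (m+2)) :
    ∀ n e, a n ^ (n + e) ≤ a 0 ^ e * a (n + e) ^ n := by
  intro n
  induction n with
  | zero => intro e; simp
  | succ n ih =>
    intro e
    have h1 : a (n+1) ^ (e+1) ≤ a n ^ e * a (n+1+e) := seq_pow a ha h n e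
    have h3 : a n ^ (n+1+e) ≤ a 0 ^ (e+1) * a (n+1+e) ^ n := by
      have := ih (e+1)
      rwa [show n + (e+1) = n+1+e by omega] at this
    have key : (a (n+1) ^ (n+1+e)) ^ (e+1) ≤ (a 0 ^ e * a (n+1+e) ^ (n+1)) ^ (e+1) := by
      calc (a (n+1) ^ (n+1+e)) ^ (e+1) = (a (n+1) ^ (e+1)) ^ (n+1+e) := by
            rw [← pow_mul, ← pow_mul, Nat.mul_comm]
        _ ≤ (a n ^ e * a (n+1+e)) ^ (n+1+e) :=
            pow_le_pow_left₀ (pow_nonneg (ha _) _) h1 _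
        _ = (a n ^ (n+1+e)) ^ e * a (n+1+e) ^ (n+1+e) := by
            rw [mul_pow, ← pow_mul, ← pow_mul, Nat.mul_comm]
        _ ≤ (a 0 ^ (e+1) * a (n+1+e) ^ n) ^ e * a (n+1+e) ^ (n+1+e) :=
            mul_le_mul_of_nonneg_right (pow_le_pow_left₀ (pow_nonneg (ha n) _) h3 e)
              (pow_nonneg (ha _) _)
        _ = (a 0 ^ e * a (n+1+e) ^ (n+1)) ^ (e+1) := by ring
    exact le_of_pow_le_pow_left₀ (by omega)
      (mul_nonneg (pow_nonneg (ha 0) e) (pow_nonneg (ha _) _)) key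

end AuxSeq

section AuxOp

variable {H : Type*} [NormedAddCommGroup H] [InnerProductSpace ℂ H] [CompleteSpace H]

set_option synthInstance.maxHeartbeats 1000000

private lemma sa_inner_comm {S : H →L[ℂ] H} (hS : IsSelfAdjoint S) (y z : H) :
    ⟪S y, z⟫_ℂ = ⟪y, S z⟫_ℂ := by
  conv_lhs => rw [← hS.adjoint_eq]
  exact ContinuousLinearMap.adjoint_inner_left S z y

private lemma key_norm_sq {S : H →L[ℂ] H} (hS : IsSelfAdjoint S) (x : H) (m : ℕ) :
    (⟪((S ^ 2) ^ m) x, x⟫_ℂ).re = ‖(S ^ m) x‖ ^ 2 := by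
  have h1 : (S ^ 2) ^ m = S ^ m * S ^ m := by rw [← pow_mul, two_mul, pow_add]
  rw [h1, ContinuousLinearMap.mul_apply, sa_inner_comm (hS.pow m)]
  exact inner_self_eq_norm_sq (𝕜 := ℂ) _

private lemma inner_pow_le (T : H →L[ℂ] H) (hT : 0 ≤ T) (x : H) (n e : ℕ) :
    (⟪(T ^ n) x, x⟫_ℂ).re ^ (n + e) ≤
      (‖x‖ ^ 2) ^ e * (⟪(T ^ (n + e)) x, x⟫_ℂ).re ^ n := by
  set S := CFC.sqrt T with hSdef
  have hS0 : 0 ≤ S := CFC.sqrt_nonneg _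
  have hSsa : IsSelfAdjoint S := IsSelfAdjoint.of_nonneg hS0
  have hT2 : S ^ 2 = T := CFC.sq_sqrt T hT
  have key : ∀ m, (⟪(T ^ m) x, x⟫_ℂ).re = ‖(S ^ m) x‖ ^ 2 := fun m => by
    rw [← hT2]; exact key_norm_sq hSsa x m
  have hCS : ∀ m, ‖(S ^ (m+1)) x‖ ^ 2 ≤ ‖(S ^ m) x‖ * ‖(S ^ (m+2)) x‖ := by
    intro m
    have h1 : ⟪(S ^ (m+1)) x, (S ^ (m+1)) x⟫_ℂ = ⟪(S ^ m) x, (S ^ (m+2)) x⟫_ℂ := by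
      have e1 : (S ^ (m+1)) x = S ((S ^ m) x) := by
        rw [pow_succ']; rfl
      have e2 : S (S ((S ^ m) x)) = (S ^ (m+2)) x := by
        rw [pow_succ' S (m+1), pow_succ' S m]; rfl
      rw [e1, sa_inner_comm hSsa, e2]
    calc ‖(S ^ (m+1)) x‖ ^ 2 = (⟪(S ^ (m+1)) x, (S ^ (m+1)) x⟫_ℂ).re :=
          (inner_self_eq_norm_sq (𝕜 := ℂ) _).symm
      _ = (⟪(S ^ m) x, (S ^ (m+2)) x⟫_ℂ).re := by rw [h1]
      _ ≤ ‖(S ^ m) x‖ * ‖(S ^ (m+2)) x‖ := re_inner_le_norm (𝕜 := ℂ) _ _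
  have main := seq_interp (fun m => ‖(S ^ m) x‖) (fun m => norm_nonneg _) hCS n e
  simp only [pow_zero, ContinuousLinearMap.one_apply] at main
  rw [key n, key (n+e)]
  calc (‖(S ^ n) x‖ ^ 2) ^ (n+e) = (‖(S ^ n) x‖ ^ (n+e)) ^ 2 := by
        rw [← pow_mul, ← pow_mul, Nat.mul_comm]
    _ ≤ (‖x‖ ^ e * ‖(S ^ (n+e)) x‖ ^ n) ^ 2 :=
        pow_le_pow_left₀ (pow_nonneg (norm_nonneg _) _) main 2
    _ = (‖x‖ ^ 2) ^ e * (‖(S ^ (n+e)) x‖ ^ 2) ^ n := by ring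

private lemma opAbs_nonneg (T : H →L[ℂ] H) : 0 ≤ opAbs T := CFC.sqrt_nonneg _

private lemma adj_mul_self_nonneg (T : H →L[ℂ] H) :
    0 ≤ ContinuousLinearMap.adjoint T * T := by
  rw [← ContinuousLinearMap.star_eq_adjoint]
  exact star_mul_self_nonneg T

private lemma opAbs_norm (T : H →L[ℂ] H) : ‖opAbs T‖ = ‖T‖ := by
  have h1 : IsSelfAdjoint (opAbs T) := IsSelfAdjoint.of_nonneg (opAbs_nonneg T)
  have h2 : opAbs T ^ 2 = ContinuousLinearMap.adjoint T * T :=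
    CFC.sq_sqrt _ (adj_mul_self_nonneg T)
  have h3 : ‖opAbs T‖ * ‖opAbs T‖ = ‖T‖ * ‖T‖ := by
    calc ‖opAbs T‖ * ‖opAbs T‖ = ‖star (opAbs T) * opAbs T‖ :=
          (CStarRing.norm_star_mul_self).symm
      _ = ‖opAbs T ^ 2‖ := by rw [h1.star_eq, sq]
      _ = ‖star T * T‖ := by rw [h2, ContinuousLinearMap.star_eq_adjoint]
      _ = ‖T‖ * ‖T‖ := CStarRing.norm_star_mul_self
  exact (mul_self_inj_of_nonneg (norm_nonneg _) (norm_nonneg _)).mp h3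

private lemma absPow_nonneg (T : H →L[ℂ] H) (n : ℕ) : 0 ≤ absPow T n := by
  rw [absPow, CFC.nnrpow_eq_pow]
  exact CFC.nnrpow_nonneg

private lemma absPow_pow (T : H →L[ℂ] H) {N : ℕ} (hN : N ≠ 0) :
    absPow T N ^ N = opAbs (T ^ N) := by
  have h0 : 0 ≤ opAbs (T ^ N) := opAbs_nonneg _
  have hNpos : (0:ℝ≥0) < (N : ℝ≥0) := by exact_mod_cast Nat.pos_of_ne_zero hN
  rw [absPow, CFC.nnrpow_eq_pow]
  have hb' : 0 ≤ opAbs (T ^ N) ^ ((N : ℝ≥0))⁻¹ := CFC.nnrpow_nonneg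
  calc (opAbs (T ^ N) ^ ((N : ℝ≥0))⁻¹) ^ N
      = (opAbs (T ^ N) ^ ((N : ℝ≥0))⁻¹) ^ ((N : ℝ):ℝ) := (CFC.rpow_natCast _ N hb').symm
    _ = (opAbs (T ^ N) ^ ((N : ℝ≥0))⁻¹) ^ ((N : ℝ≥0)) := by
        rw [CFC.nnrpow_eq_rpow hNpos, NNReal.coe_natCast]
    _ = opAbs (T ^ N) := CFC.nnrpow_inv_nnrpow _ hNpos.ne' h0

private lemma cont_re_inner (x : H) :
    Continuous fun T : H →L[ℂ] H => (⟪T x, x⟫_ℂ).re := by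
  have h1 : Continuous fun T : H →L[ℂ] H => T x :=
    (ContinuousLinearMap.apply ℂ H x).continuous
  exact Complex.continuous_re.comp ((h1.inner continuous_const))

private lemma lim_nonneg {B : H →L[ℂ] H} {G : ℕ → H →L[ℂ] H} (hG : ∀ k, 0 ≤ G k)
    (hlim : Tendsto G atTop (𝓝 B)) : 0 ≤ B := by
  have hsa : IsSelfAdjoint B := by
    have h1 : Tendsto (fun k => star (G k)) atTop (𝓝 (star B)) :=
      (continuous_star.tendsto B).comp hlim
    have h2 : (fun k => star (G k)) = G :=
      funext fun k => (IsSelfAdjoint.of_nonneg (hG k)).star_eq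
    rw [h2] at h1
    exact tendsto_nhds_unique h1 hlim
  rw [ContinuousLinearMap.nonneg_iff_isPositive]
  refine ⟨ContinuousLinearMap.isSelfAdjoint_iff_isSymmetric.mp hsa, fun y => ?_⟩
  rw [ContinuousLinearMap.reApplyInnerSelf_apply]
  have h3 : Tendsto (fun k => (⟪(G k) y, y⟫_ℂ).re) atTop (𝓝 ((⟪B y, y⟫_ℂ).re)) :=
    ((cont_re_inner y).tendsto B).comp hlim
  refine ge_of_tendsto h3 (Eventually.of_forall fun k => ?_)
  exact ((ContinuousLinearMap.nonneg_iff_isPositive _).mp (hG k)).re_inner_nonneg_left y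

end AuxOp

set_option synthInstance.maxHeartbeats 1000000 in
set_option maxHeartbeats 1000000 in
/-- If `A` is compact with `‖A‖ < 1` and `B` is an operator-norm limit point of
`(|A^n|^{1/n})`, then `V(A,r) ⊆ V(B,r)` for every `r ≥ 0`. -/
theorem V_subset_V_of_limit_point {H : Type*} [NormedAddCommGroup H]
    [InnerProductSpace ℂ H] [CompleteSpace H] [TopologicalSpace.SeparableSpace H]
    (A : H →L[ℂ] H) (hA : IsCompactOperator (⇑A)) (hnorm : ‖A‖ < 1)
    (B : H →L[ℂ] H)
    (hB : ∃ φ : ℕ → ℕ, StrictMono φ ∧ Tendsto (fun k : ℕ => absPow A (φ k)) atTop (𝓝 B))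
    (r : ℝ) (hr : 0 ≤ r) :
    {x : H | atTop.limsup (fun n : ℕ => (⟪opAbs (A ^ n) x, x⟫_ℂ).re ^ (1 / n : ℝ)) ≤ r} ⊆
    {x : H | atTop.limsup (fun n : ℕ => (⟪opAbs (B ^ n) x, x⟫_ℂ).re ^ (1 / n : ℝ)) ≤ r} := by
  obtain ⟨φ, hφ, hlim⟩ := hB
  intro x hx
  simp only [Set.mem_setOf_eq] at hx ⊢
  have hu0 : ∀ n : ℕ, 0 ≤ (⟪opAbs (A ^ n) x, x⟫_ℂ).re := fun n =>
    ((ContinuousLinearMap.nonneg_iff_isPositive _).mp (opAbs_nonneg (A ^ n))).re_inner_nonneg_left x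
  have hubd : ∀ n : ℕ, (⟪opAbs (A ^ n) x, x⟫_ℂ).re ≤ ‖x‖ ^ 2 := by
    intro n
    have h1 : (⟪opAbs (A ^ n) x, x⟫_ℂ).re ≤ ‖opAbs (A ^ n) x‖ * ‖x‖ :=
      re_inner_le_norm (𝕜 := ℂ) _ _
    have h2 : ‖opAbs (A ^ n) x‖ ≤ ‖A ^ n‖ * ‖x‖ := by
      rw [← opAbs_norm (A ^ n)]; exact (opAbs (A ^ n)).le_opNorm x
    have h3 : ‖A ^ n‖ ≤ 1 := by
      rcases Nat.eq_zero_or_pos n with h0 | hpos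
      · subst h0; rw [pow_zero]; exact ContinuousLinearMap.norm_id_le
      · calc ‖A ^ n‖ ≤ ‖A‖ ^ n := norm_pow_le' A hpos
          _ ≤ 1 := pow_le_one₀ (norm_nonneg A) hnorm.le
    nlinarith [norm_nonneg x, norm_nonneg (opAbs (A ^ n) x)]
  set C := max 1 (‖x‖ ^ 2) with hCdef
  have hC1 : (1:ℝ) ≤ C := le_max_left _ _
  have hCx : ‖x‖ ^ 2 ≤ C := le_max_right _ _
  have hC0 : (0:ℝ) < C := lt_of_lt_of_le one_pos hC1
  have hfb : ∀ n : ℕ, (⟪opAbs (A ^ n) x, x⟫_ℂ).re ^ (1 / n : ℝ) ≤ C := by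
    intro n
    rcases Nat.eq_zero_or_pos n with h0 | hpos
    · subst h0
      simp only [Nat.cast_zero, div_zero, Real.rpow_zero]
      exact hC1
    · have hn1 : (1:ℝ) ≤ (n:ℝ) := by exact_mod_cast hpos
      have h1 : (⟪opAbs (A ^ n) x, x⟫_ℂ).re ^ (1 / n : ℝ) ≤ C ^ (1 / n : ℝ) :=
        Real.rpow_le_rpow (hu0 n) ((hubd n).trans hCx) (by positivity)
      have h2 : C ^ (1 / n : ℝ) ≤ C ^ (1:ℝ) :=
        Real.rpow_le_rpow_of_exponent_le hC1 (by
          rw [div_le_one (by linarith)]; exact hn1)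
      calc (⟪opAbs (A ^ n) x, x⟫_ℂ).re ^ (1 / n : ℝ) ≤ C ^ (1 / n : ℝ) := h1
        _ ≤ C ^ (1:ℝ) := h2
        _ = C := Real.rpow_one C
  have hGnn : ∀ k, 0 ≤ absPow A (φ k) := fun k => absPow_nonneg A (φ k)
  have hB0 : 0 ≤ B := lim_nonneg hGnn hlim
  have hBn : ∀ n : ℕ, opAbs (B ^ n) = B ^ n := by
    intro n
    have h1 : 0 ≤ B ^ n := CStarAlgebra.pow_nonneg hB0 n
    rw [opAbs, ← ContinuousLinearMap.star_eq_adjoint,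
      ((IsSelfAdjoint.of_nonneg hB0).pow n).star_eq, ← sq]
    exact CFC.sqrt_sq _ h1
  have hv0 : ∀ n : ℕ, 0 ≤ (⟪(B ^ n) x, x⟫_ℂ).re := fun n =>
    ((ContinuousLinearMap.nonneg_iff_isPositive _).mp
      (CStarAlgebra.pow_nonneg hB0 n)).re_inner_nonneg_left x
  have key : ∀ s : ℝ, r < s →
      atTop.limsup (fun n : ℕ => (⟪opAbs (B ^ n) x, x⟫_ℂ).re ^ (1 / n : ℝ)) ≤ s := by
    intro s hrs
    have hs0 : 0 < s := lt_of_le_of_lt hr hrs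
    have hbdd : IsBoundedUnder (· ≤ ·) atTop
        (fun n : ℕ => (⟪opAbs (A ^ n) x, x⟫_ℂ).re ^ (1 / n : ℝ)) :=
      isBoundedUnder_of ⟨C, hfb⟩
    have hevA : ∀ᶠ n : ℕ in atTop, (⟪opAbs (A ^ n) x, x⟫_ℂ).re ^ (1 / n : ℝ) < s :=
      eventually_lt_of_limsup_lt (lt_of_le_of_lt hx hrs) hbdd
    have hevA2 : ∀ᶠ n : ℕ in atTop, (⟪opAbs (A ^ n) x, x⟫_ℂ).re ≤ s ^ n := by
      filter_upwards [hevA, eventually_ge_atTop 1] with n h1 h2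
      have hn0 : (n:ℝ) ≠ 0 := Nat.cast_ne_zero.mpr (by omega)
      have e1 : ((⟪opAbs (A ^ n) x, x⟫_ℂ).re ^ (1 / n : ℝ)) ^ (n:ℕ)
          = (⟪opAbs (A ^ n) x, x⟫_ℂ).re := by
        rw [← Real.rpow_natCast ((⟪opAbs (A ^ n) x, x⟫_ℂ).re ^ (1 / n : ℝ)) n,
          ← Real.rpow_mul (hu0 n), one_div, inv_mul_cancel₀ hn0, Real.rpow_one]
      calc (⟪opAbs (A ^ n) x, x⟫_ℂ).re
          = ((⟪opAbs (A ^ n) x, x⟫_ℂ).re ^ (1 / n : ℝ)) ^ (n:ℕ) := e1.symm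
        _ ≤ s ^ n := pow_le_pow_left₀ (Real.rpow_nonneg (hu0 n) _) h1.le n
    obtain ⟨n₀, hn₀⟩ := eventually_atTop.mp hevA2
    have hvb : ∀ n : ℕ, 1 ≤ n → (⟪(B ^ n) x, x⟫_ℂ).re ≤ C * s ^ n := by
      intro n hn
      have htd : Tendsto (fun k => (⟪((absPow A (φ k)) ^ n) x, x⟫_ℂ).re) atTop
          (𝓝 ((⟪(B ^ n) x, x⟫_ℂ).re)) :=
        ((cont_re_inner x).tendsto (B ^ n)).comp (hlim.pow n)
      refine le_of_tendsto htd ?_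
      filter_upwards [eventually_ge_atTop (max n₀ (n+1))] with k hk
      have hN1 : n₀ ≤ φ k := le_trans (le_trans (le_max_left _ _) hk) hφ.le_apply
      have hN2 : n + 1 ≤ φ k := le_trans (le_trans (le_max_right _ _) hk) hφ.le_apply
      set N := φ k with hNdef
      have hNe : N = n + (N - n) := by omega
      have hip := inner_pow_le (absPow A N) (hGnn k) x n (N - n)
      rw [← hNe] at hip
      rw [absPow_pow A (show N ≠ 0 by omega)] at hip
      have hu_le : (⟪opAbs (A ^ N) x, x⟫_ℂ).re ≤ s ^ N := hn₀ N hN1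
      have goal_pow : ((⟪((absPow A N) ^ n) x, x⟫_ℂ).re) ^ N ≤ (C * s ^ n) ^ N := by
        calc ((⟪((absPow A N) ^ n) x, x⟫_ℂ).re) ^ N
            ≤ (‖x‖ ^ 2) ^ (N - n) * ((⟪opAbs (A ^ N) x, x⟫_ℂ).re) ^ n := hip
          _ ≤ C ^ (N - n) * (s ^ N) ^ n :=
              mul_le_mul (pow_le_pow_left₀ (sq_nonneg _) hCx (N - n))
                (pow_le_pow_left₀ (hu0 N) hu_le n)
                (pow_nonneg (hu0 N) n) (pow_nonneg hC0.le (N - n))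
          _ ≤ C ^ N * (s ^ N) ^ n :=
              mul_le_mul_of_nonneg_right (pow_le_pow_right₀ hC1 (by omega))
                (pow_nonneg (pow_nonneg hs0.le N) n)
          _ = (C * s ^ n) ^ N := by rw [mul_pow, ← pow_mul, ← pow_mul, Nat.mul_comm]
      exact le_of_pow_le_pow_left₀ (show N ≠ 0 by omega)
        (mul_nonneg hC0.le (pow_nonneg hs0.le n)) goal_pow
    have h1 : ∀ᶠ n : ℕ in atTop,
        (⟪opAbs (B ^ n) x, x⟫_ℂ).re ^ (1 / n : ℝ) ≤ C ^ (1 / n : ℝ) * s := by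
      filter_upwards [eventually_ge_atTop 1] with n hn
      have hn0 : (n:ℝ) ≠ 0 := Nat.cast_ne_zero.mpr (by omega)
      rw [hBn n]
      calc (⟪(B ^ n) x, x⟫_ℂ).re ^ (1 / n : ℝ) ≤ (C * s ^ n) ^ (1 / n : ℝ) :=
            Real.rpow_le_rpow (hv0 n) (hvb n hn) (by positivity)
        _ = C ^ (1 / n : ℝ) * s := by
            rw [Real.mul_rpow hC0.le (pow_nonneg hs0.le n), ← Real.rpow_natCast s n,
              ← Real.rpow_mul hs0.le, mul_one_div, div_self hn0, Real.rpow_one]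
    have h2 : Tendsto (fun n : ℕ => C ^ (1 / n : ℝ) * s) atTop (𝓝 s) := by
      have h3 : Tendsto (fun n : ℕ => (1 / n : ℝ)) atTop (𝓝 0) :=
        tendsto_one_div_atTop_nhds_zero_nat
      have h4 : Tendsto (fun n : ℕ => C ^ (1 / n : ℝ)) atTop (𝓝 1) := by
        have h5 := (Real.continuousAt_const_rpow (a := C) (b := 0) hC0.ne').tendsto.comp h3
        simpa [Real.rpow_zero, Function.comp_def] using h5
      simpa using h4.mul (tendsto_const_nhds (x := s))
    calc atTop.limsup (fun n : ℕ => (⟪opAbs (B ^ n) x, x⟫_ℂ).re ^ (1 / n : ℝ))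
        ≤ atTop.limsup (fun n : ℕ => C ^ (1 / n : ℝ) * s) := by
          refine limsup_le_limsup h1 ?_ h2.isBoundedUnder_le
          refine isCoboundedUnder_le_of_le atTop (x := 0) fun n => ?_
          rw [hBn n]
          exact Real.rpow_nonneg (hv0 n) _
        _ = s := h2.limsup_eq
  by_contra hcon
  push_neg at hcon
  obtain ⟨s, hs1, hs2⟩ := exists_between hcon
  exact absurd (key s hs1) (not_le.mpr hs2)
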